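/- Let μ and μ′ be partitions of a positive integer n with at most d parts, and suppose μ is majorized by μ′. Let D_λ denote the dimension of the irreducible polynomial representation of GL(d,ℂ) (equivalently U(d)) with highest weight λ, and d_λ the dimension of the irreducible representation of the symmetric group S_n labeled by λ. Then D_μ/d_μ ≤ D_{μ′}/d_{μ′}. -/

import Mathlib

open Real Finset

noncomputable def lg : ℝ → ℝ := fun x => Real.log (Real.Gamma x)

lemma lg_convex : ConvexOn ℝ (Set.Ioi 0) lg := Real.convexOn_log_Gamma

/-- unit slope of `lg` is monotone -/
lemma lg_unit_slope_mono {a b : ℝ} (ha : 0 < a) (hab : a ≤ b) :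
    lg (a + 1) - lg a ≤ lg (b + 1) - lg b := by
  rcases eq_or_lt_of_le hab with rfl | hab
  · rfl
  have hb : 0 < b := lt_trans ha hab
  have h1 : (lg (a+1) - lg a) / ((a+1) - a) ≤ (lg (b+1) - lg a) / ((b+1) - a) := by
    refine lg_convex.secant_mono (Set.mem_Ioi.2 ha) (by simp; linarith) (by simp; linarith)
      (by linarith) (by linarith) (by linarith)
  have h2 : (lg a - lg (b+1)) / (a - (b+1)) ≤ (lg b - lg (b+1)) / (b - (b+1)) := by
    refine lg_convex.secant_mono (by simp; linarith) (Set.mem_Ioi.2 ha) (Set.mem_Ioi.2 hb)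
      (by linarith) (by linarith) (by linarith)
  have e1 : (lg (a+1) - lg a) / ((a+1) - a) = lg (a+1) - lg a := by ring_nf
  have e2 : (lg a - lg (b+1)) / (a - (b+1)) = (lg (b+1) - lg a) / ((b+1) - a) := by
    rw [← neg_div_neg_eq]; ring_nf
  have e3 : (lg b - lg (b+1)) / (b - (b+1)) = lg (b+1) - lg b := by
    rw [show b - (b+1) = -1 by ring]; field_simp; ring
  rw [e1] at h1; rw [e2, e3] at h2; linarith

lemma lg_step_up (x : ℝ) (hx : 0 < x) (k : ℕ) :
    lg x + k * (lg (x + 1) - lg x) ≤ lg (x + k) := by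
  induction k with
  | zero => simp
  | succ k ih =>
    have hxk : 0 < x + k := by positivity
    have h := lg_unit_slope_mono hx (le_add_of_nonneg_right (Nat.cast_nonneg k) : x ≤ x + k)
    push_cast
    have : lg (x + (k + 1)) = lg ((x + k) + 1) := by ring_nf
    rw [this]
    push_cast at ih
    linarith

lemma lg_step_down (x : ℝ) (hx : 0 < x) (k : ℕ) (hxk : 0 < x - k) :
    lg x - k * (lg (x + 1) - lg x) ≤ lg (x - k) := by
  induction k with
  | zero => simp
  | succ k ih =>
    have hxk' : 0 < x - k := by push_cast at hxk ⊢; linarith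
    have h := lg_unit_slope_mono hxk (by push_cast at hxk ⊢; linarith : x - (k+1:ℕ) ≤ x)
    have e : x - (k+1:ℕ) + 1 = x - k := by push_cast; ring
    rw [e] at h
    have := ih hxk'
    push_cast at this h ⊢
    linarith

lemma lg_step (x : ℝ) (hx : 0 < x) (m : ℤ) (hxm : 0 < x + m) :
    lg x + m * (lg (x + 1) - lg x) ≤ lg (x + m) := by
  rcases le_or_gt 0 m with hm | hm
  · obtain ⟨k, rfl⟩ := Int.eq_ofNat_of_zero_le hm
    have := lg_step_up x hx k
    push_cast at this ⊢; linarith [this]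
  · obtain ⟨k, rfl⟩ : ∃ k : ℕ, m = -(k:ℤ) := ⟨m.natAbs, by omega⟩
    have hxk : 0 < x - k := by push_cast at hxm ⊢; linarith
    have := lg_step_down x hx k hxk
    push_cast at this ⊢
    rw [show x + -(k:ℝ) = x - k by ring]
    linarith [this]

lemma abel_lemma (S Z : ℕ → ℝ) :
    ∀ d : ℕ, (∀ i j, i ≤ j → j ≤ d → S j ≤ S i) →
    (∀ k, k ≤ d → 0 ≤ ∑ i ∈ Finset.range k, Z i) →
    S d * ∑ i ∈ Finset.range d, Z i ≤ ∑ i ∈ Finset.range d, S i * Z i := by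
  intro d
  induction d with
  | zero => simp
  | succ d ih =>
    intro hS hZ
    have ih' := ih (fun i j hij hj => hS i j hij (by omega))
      (fun k hk => hZ k (by omega))
    rw [Finset.sum_range_succ, Finset.sum_range_succ]
    have h1 : S d * ∑ i ∈ Finset.range d, Z i + S d * Z d
        ≤ (∑ i ∈ Finset.range d, S i * Z i) + S d * Z d := by linarith
    have h2 : S (d+1) * (∑ i ∈ Finset.range d, Z i + Z d)
        ≤ S d * (∑ i ∈ Finset.range d, Z i + Z d) := by
      apply mul_le_mul_of_nonneg_right (hS d (d+1) (by omega) le_rfl)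
      have := hZ (d+1) le_rfl
      rwa [Finset.sum_range_succ] at this
    calc S (d+1) * (∑ i ∈ Finset.range d, Z i + Z d)
        ≤ S d * (∑ i ∈ Finset.range d, Z i + Z d) := h2
      _ = S d * ∑ i ∈ Finset.range d, Z i + S d * Z d := by ring
      _ ≤ (∑ i ∈ Finset.range d, S i * Z i) + S d * Z d := h1

/-- The ratio `D_μ/d_μ` of the dimension of the irreducible `GL(d,ℂ)` representation with
highest weight `μ` to the dimension of the irreducible `S_n` representation labeled by `μ`,
given by `(1/n!) · Π_{j=1}^{d} Γ(d + μ_j − j + 1)/Γ(d − j + 1)` (hook-content/hook-length). -/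
noncomputable def dimRatio (d n : ℕ) (μ : Fin d → ℕ) : ℝ :=
  (∏ i : Fin d, Real.Gamma ((d : ℝ) + μ i - i) / Real.Gamma ((d : ℝ) - i)) / (n.factorial : ℝ)

theorem stmt_16 (d n : ℕ) (hd : 1 ≤ d) (hn : 1 ≤ n) (μ μ' : Fin d → ℕ)
    (hμmono : ∀ i j : Fin d, i ≤ j → μ j ≤ μ i)
    (hμ'mono : ∀ i j : Fin d, i ≤ j → μ' j ≤ μ' i)
    (hμsum : ∑ i, μ i = n) (hμ'sum : ∑ i, μ' i = n)
    (hmaj : ∀ k : ℕ, ∑ i ∈ Finset.univ.filter (fun i : Fin d => (i : ℕ) < k), μ i ≤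
      ∑ i ∈ Finset.univ.filter (fun i : Fin d => (i : ℕ) < k), μ' i) :
    dimRatio d n μ ≤ dimRatio d n μ' := by
  classical
  set x : Fin d → ℝ := fun i => (d : ℝ) + μ i - i with hxdef
  set y : Fin d → ℝ := fun i => (d : ℝ) + μ' i - i with hydef
  have hdi : ∀ i : Fin d, ((i : ℕ) : ℝ) < d := fun i => by exact_mod_cast i.2
  have hx0 : ∀ i, 0 < x i := fun i => by
    have h := hdi i; have h2 : (0:ℝ) ≤ (μ i : ℝ) := Nat.cast_nonneg _
    simp only [hxdef]; linarith
  have hy0 : ∀ i, 0 < y i := fun i => by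
    have h := hdi i; have h2 : (0:ℝ) ≤ (μ' i : ℝ) := Nat.cast_nonneg _
    simp only [hydef]; linarith
  set s : Fin d → ℝ := fun i => lg (x i + 1) - lg (x i) with hsdef
  -- pointwise convexity bound
  have hpt : ∀ i, lg (x i) + ((μ' i : ℝ) - μ i) * s i ≤ lg (y i) := by
    intro i
    have hm : y i = x i + (((μ' i : ℤ) - μ i : ℤ) : ℝ) := by
      simp only [hxdef, hydef]; push_cast; ring
    have h := lg_step (x i) (hx0 i) ((μ' i : ℤ) - μ i) (by rw [← hm]; exact hy0 i)
    rw [← hm] at h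
    have e : (((μ' i : ℤ) - μ i : ℤ) : ℝ) = (μ' i : ℝ) - μ i := by push_cast; ring
    rw [e] at h; exact h
  -- s is antitone
  have hsanti : ∀ i j : Fin d, i ≤ j → s j ≤ s i := by
    intro i j hij
    have hμle : (μ j : ℝ) ≤ μ i := by exact_mod_cast hμmono i j hij
    have hji : ((i : ℕ) : ℝ) ≤ ((j : ℕ) : ℝ) := by exact_mod_cast hij
    have hxle : x j ≤ x i := by simp only [hxdef]; linarith
    exact lg_unit_slope_mono (hx0 j) hxle
  have hd1 : d - 1 < d := by omega
  set S : ℕ → ℝ := fun k => if h : k < d then s ⟨k, h⟩ else s ⟨d - 1, hd1⟩ with hSdef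
  set Z : ℕ → ℝ := fun k => if h : k < d then (μ' ⟨k, h⟩ : ℝ) - μ ⟨k, h⟩ else 0 with hZdef
  have hSanti : ∀ i j, i ≤ j → j ≤ d → S j ≤ S i := by
    intro i j hij hjd
    simp only [hSdef]
    rcases lt_or_eq_of_le hjd with hj | rfl
    · have hi : i < d := lt_of_le_of_lt hij hj
      rw [dif_pos hj, dif_pos hi]
      exact hsanti ⟨i, hi⟩ ⟨j, hj⟩ hij
    · rw [dif_neg (lt_irrefl j)]
      by_cases hi : i < j
      · rw [dif_pos hi]
        exact hsanti ⟨i, hi⟩ ⟨j - 1, hd1⟩ (by simp only [Fin.le_def]; omega)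
      · have : i = j := by omega
        subst this; rw [dif_neg (lt_irrefl i)]
  -- partial sums of Z
  have hZsum : ∀ k, k ≤ d → ∑ i ∈ Finset.range k, Z i
      = (∑ i ∈ Finset.univ.filter (fun i : Fin d => (i : ℕ) < k), (μ' i : ℝ))
        - ∑ i ∈ Finset.univ.filter (fun i : Fin d => (i : ℕ) < k), (μ i : ℝ) := by
    intro k hk
    rw [← Finset.sum_sub_distrib, Finset.sum_filter]
    have e1 : ∀ i : Fin d,
        (if (i : ℕ) < k then (μ' i : ℝ) - μ i else 0)
          = (fun j : ℕ => if j < k then Z j else 0) (i : ℕ) := by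
      intro i
      simp only [hZdef]
      by_cases h : (i : ℕ) < k
      · simp only [h, if_true, dif_pos i.2, Fin.eta]
      · simp only [h, if_false]
    rw [Finset.sum_congr rfl (fun i _ => e1 i),
      Fin.sum_univ_eq_sum_range (fun j : ℕ => if j < k then Z j else 0)]
    rw [← Finset.sum_subset (Finset.range_subset_range.2 hk)
      (fun j _ hj => by simp [Finset.mem_range.not.1 hj])]
    exact (Finset.sum_congr rfl (fun j hj => by simp [Finset.mem_range.1 hj])).symm
  have hZnonneg : ∀ k, k ≤ d → 0 ≤ ∑ i ∈ Finset.range k, Z i := by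
    intro k hk
    rw [hZsum k hk, sub_nonneg, ← Nat.cast_sum, ← Nat.cast_sum]
    exact_mod_cast hmaj k
  have hZtotal : ∑ i ∈ Finset.range d, Z i = 0 := by
    rw [hZsum d le_rfl]
    rw [Finset.filter_true_of_mem (fun i _ => i.2)]
    rw [← Nat.cast_sum, ← Nat.cast_sum, hμsum, hμ'sum, sub_self]
  have habel := abel_lemma S Z d hSanti hZnonneg
  rw [hZtotal, mul_zero] at habel
  have hSZ : ∑ i ∈ Finset.range d, S i * Z i
      = ∑ i : Fin d, s i * ((μ' i : ℝ) - μ i) := by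
    rw [← Fin.sum_univ_eq_sum_range (fun j : ℕ => S j * Z j)]
    refine Finset.sum_congr rfl (fun i _ => ?_)
    simp only [hSdef, hZdef, dif_pos i.2, Fin.eta]
  rw [hSZ] at habel
  -- key sum inequality
  have hkey : ∑ i, lg (x i) ≤ ∑ i, lg (y i) := by
    have h1 : ∑ i, (lg (x i) + ((μ' i : ℝ) - μ i) * s i) ≤ ∑ i, lg (y i) :=
      Finset.sum_le_sum (fun i _ => hpt i)
    rw [Finset.sum_add_distrib] at h1
    have h2 : ∑ i : Fin d, ((μ' i : ℝ) - μ i) * s i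
        = ∑ i : Fin d, s i * ((μ' i : ℝ) - μ i) :=
      Finset.sum_congr rfl (fun i _ => mul_comm _ _)
    rw [h2] at h1
    linarith
  -- product inequality
  have ex : ∀ (f : Fin d → ℝ), (∀ i, 0 < f i) →
      ∏ i, Real.Gamma (f i) = Real.exp (∑ i, lg (f i)) := by
    intro f hf
    rw [Real.exp_sum]
    exact Finset.prod_congr rfl
      (fun i _ => (Real.exp_log (Real.Gamma_pos_of_pos (hf i))).symm)
  have hprod : ∏ i, Real.Gamma (x i) ≤ ∏ i, Real.Gamma (y i) := by
    rw [ex x hx0, ex y hy0]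
    exact Real.exp_le_exp.2 hkey
  -- finish
  have hden : 0 < ∏ i : Fin d, Real.Gamma ((d : ℝ) - i) :=
    Finset.prod_pos (fun i _ => Real.Gamma_pos_of_pos (by have := hdi i; linarith))
  have hfact : (0:ℝ) < (n.factorial : ℝ) := by positivity
  show (∏ i : Fin d, Real.Gamma (x i) / Real.Gamma ((d : ℝ) - i)) / (n.factorial : ℝ)
      ≤ (∏ i : Fin d, Real.Gamma (y i) / Real.Gamma ((d : ℝ) - i)) / (n.factorial : ℝ)
  rw [Finset.prod_div_distrib, Finset.prod_div_distrib]
  have h1 : (∏ i, Real.Gamma (x i)) / ∏ i : Fin d, Real.Gamma ((d : ℝ) - i)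
      ≤ (∏ i, Real.Gamma (y i)) / ∏ i : Fin d, Real.Gamma ((d : ℝ) - i) := by gcongr
  gcongr
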